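/- Let G be a Hamiltonian graph of order n ≥ 5 and let (v₁, ..., v_n, v₁) be a Hamiltonian cycle in G. If d(v₁) + d(v_n) ≥ (4n − 1)/3, then [2, ⌈n/2⌉ + 2] ⊆ R_G(v₁, v_n). -/

import Mathlib

open SimpleGraph

/-- `pathOrders G u v` is the set `R_G(u, v)` of the orders (numbers of vertices) of all
`uv`-paths in `G`. -/
def pathOrders {V : Type*} (G : SimpleGraph V) (u v : V) : Set ℕ :=
  {n | ∃ P : G.Walk u v, P.IsPath ∧ P.length + 1 = n}

section aux
variable {V : Type*} {G : SimpleGraph V}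



lemma comb_aux (N m : ℕ) (hN : 3 ≤ N) (hm : 2*m ≤ N+1) (A B : Finset ℕ)
    (hA : A ⊆ Finset.Icc 1 N) (hB : B ⊆ Finset.Icc 1 N)
    (hcard : 4*N + 1 ≤ 3*(A.card + B.card)) :
    ∃ i ∈ A, ∃ j ∈ B, i = j + m ∨ j = i + m := by
  by_contra hcon
  push_neg at hcon
  set f : ℕ → ℕ := fun x => (if x ∈ A then 1 else 0) + (if x ∈ B then 1 else 0) with hf
  have hf2 : ∀ x, f x ≤ 2 := by intro x; simp only [hf]; split <;> split <;> omega
  have hpair : ∀ x, f x + f (x + m) ≤ 2 := by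
    intro x
    by_cases hxA : x ∈ A <;> by_cases hxB : x ∈ B <;>
      by_cases hyA : x + m ∈ A <;> by_cases hyB : x + m ∈ B <;>
      simp only [hf, hxA, hxB, hyA, hyB, if_true, if_false] <;>
      first
        | omega
        | (exact absurd (hcon _ hxA _ hyB) (by simp))
        | (exact absurd (hcon _ hyA _ hxB) (by simp))
  -- g a b = sum of f over Ioc a b
  set g : ℕ → ℕ → ℕ := fun a b => ∑ x ∈ Finset.Ioc a b, f x with hg
  have hshift : ∀ a k, (∑ x ∈ Finset.Ioc a (a+k), f (x + m)) = g (a+m) (a+m+k) := by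
    intro a k
    have : Finset.Ioc (a+m) (a+m+k) = (Finset.Ioc a (a+k)).map (addRightEmbedding m) := by
      rw [Finset.map_add_right_Ioc]; congr 1; omega
    rw [hg]; simp only [this, Finset.sum_map, addRightEmbedding_apply]
  have L2 : ∀ a k, g a (a+k) ≤ 2*k := by
    intro a k
    calc g a (a+k) ≤ ∑ _x ∈ Finset.Ioc a (a+k), 2 := Finset.sum_le_sum (fun x _ => hf2 x)
    _ = 2*k := by simp [Nat.card_Ioc, mul_comm]
  have L1 : ∀ a k, g a (a+k) + g (a+m) (a+m+k) ≤ 2*k := by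
    intro a k
    rw [← hshift, hg, ← Finset.sum_add_distrib]
    calc (∑ x ∈ Finset.Ioc a (a+k), (f x + f (x+m))) ≤ ∑ _x ∈ Finset.Ioc a (a+k), 2 :=
          Finset.sum_le_sum (fun x _ => hpair x)
    _ = 2*k := by simp [Nat.card_Ioc, mul_comm]
  have L0 : ∀ a k, g a (a+k) + g (a+m) (a+m+k) + g (a+2*m) (a+2*m+k) ≤ 4*k := by
    intro a k
    have h1 := L1 a k
    have h2 := L2 (a+2*m) k
    omega
  have hsplit : ∀ a b c, a ≤ b → b ≤ c → g a c = g a b + g b c := by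
    intro a b c hab hbc
    rw [hg]; exact (Finset.sum_Ioc_consecutive _ hab hbc).symm
  have hSA : A.card = ∑ x ∈ Finset.Icc 1 N, (if x ∈ A then 1 else 0) := by
    rw [Finset.sum_ite_mem, Finset.inter_eq_right.mpr hA, Finset.sum_const, smul_eq_mul, mul_one]
  have hSB : B.card = ∑ x ∈ Finset.Icc 1 N, (if x ∈ B then 1 else 0) := by
    rw [Finset.sum_ite_mem, Finset.inter_eq_right.mpr hB, Finset.sum_const, smul_eq_mul, mul_one]
  have hIoc : Finset.Icc 1 N = Finset.Ioc 0 N := by ext x; simp; omega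
  have hS : g 0 N = A.card + B.card := by
    rw [hSA, hSB, hIoc, hg, ← Finset.sum_add_distrib]
  by_cases hcase : 2*m ≤ N
  · obtain ⟨K, hK⟩ : ∃ K, N = K + 2*m := ⟨N - 2*m, by omega⟩
    have h0 := L0 0 K
    simp only [zero_add] at h0
    have hKm : K + 2*m = K + m + m := by omega
    have s1 : g 0 N = g 0 K + g K (K + m) + g (K+m) (K+2*m) := by
      rw [hK, hsplit 0 K (K+2*m) (by omega) (by omega),
          hsplit K (K+m) (K+2*m) (by omega) (by omega)]
      ring
    have h1 := L1 K m
    have s3 : g 0 N = g 0 m + g m (m+K) + g (m+K) (K+2*m) := by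
      rw [hK, hsplit 0 m (K+2*m) (by omega) (by omega),
          hsplit m (m+K) (K+2*m) (by omega) (by omega)]
      ring
    have b1 : g 0 m ≤ 2*m := by have := L2 0 m; simpa using this
    have b2 : g (m+K) (K+2*m) ≤ 2*m := by
      have := L2 (m+K) m; have e : m+K+m = K+2*m := by omega
      rwa [e] at this
    have e6 : 2*m+K = K+2*m := by omega
    rw [e6] at h0
    have s4 : g 0 N = g 0 (2*m) + g (2*m) (K+2*m) := by
      rw [hK, hsplit 0 (2*m) (K+2*m) (by omega) (by omega)]
    have b3 : g 0 (2*m) ≤ 2*m := by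
      have h := L1 0 m
      simp only [zero_add] at h
      have hs := hsplit 0 m (m+m) (by omega) (by omega)
      have e2 : (2:ℕ)*m = m+m := two_mul m
      rw [e2, hs]
      omega
    have e5 : K + m + m = K + 2*m := by omega
    rw [e5] at h1
    -- h0 : g 0 K + g m (m+K) + g (2*m) (2*m+K) ≤ 4*K
    -- s1, s3, s4, h1, b1, b2, b3, hS, hcard
    omega
  · -- 2*m = N+1
    have hm2 : 2*m = N + 1 := by omega
    have hm1 : 1 ≤ m := by omega
    obtain ⟨M1, hM1⟩ : ∃ M1, m = M1 + 1 := ⟨m - 1, by omega⟩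
    have h1 := L1 0 M1
    simp only [zero_add] at h1
    have s1 : g 0 N = g 0 M1 + g M1 m + g m N := by
      rw [hsplit 0 M1 N (by omega) (by omega), hsplit M1 m N (by omega) (by omega)]
      ring
    have b1 : g M1 m ≤ 2 := by
      have := L2 M1 1; have e : M1 + 1 = m := by omega
      rw [e] at this; omega
    have e2 : m + M1 = N := by omega
    rw [e2] at h1
    omega




variable {V : Type*} {G : SimpleGraph V}

/-- ascending walk along `w a, w (a+1), ..., w (a+k)` -/
def walkUp (w : ℕ → V) (h : ∀ i, G.Adj (w i) (w (i+1))) (a : ℕ) :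
    (k : ℕ) → G.Walk (w a) (w (a+k))
  | 0 => Walk.nil
  | (k+1) => (walkUp w h a k).concat (h (a+k))

lemma walkUp_length (w : ℕ → V) (h : ∀ i, G.Adj (w i) (w (i+1))) (a k : ℕ) :
    (walkUp w h a k).length = k := by
  induction k with
  | zero => rfl
  | succ k ih => simp [walkUp, ih]

lemma walkUp_support (w : ℕ → V) (h : ∀ i, G.Adj (w i) (w (i+1))) (a k : ℕ) :
    (walkUp w h a k).support = (List.range (k+1)).map (fun t => w (a + t)) := by
  induction k with
  | zero => simp [walkUp, List.range_succ]
  | succ k ih =>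
    rw [show walkUp w h a (k+1) = (walkUp w h a k).concat (h (a+k)) from rfl,
      Walk.support_concat, ih]
    conv_rhs => rw [List.range_succ]
    simp

lemma core_path (n : ℕ) (hn : 5 ≤ n) (w : ℕ → V) (h : ∀ i, G.Adj (w i) (w (i+1)))
    (hwinj : ∀ a b, a < n → b < n → w a = w b → a = b)
    (s m p r : ℕ) (hs : 1 ≤ s) (hsm : s + m ≤ n - 2)
    (hp : p = 0 ∨ p = n - 1) (hr : r = 0 ∨ r = n - 1) (hpr : p ≠ r)
    (hx : G.Adj (w p) (w s)) (hy : G.Adj (w (s+m)) (w r)) :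
    ∃ P : G.Walk (w p) (w r), P.IsPath ∧ P.length = m + 2 := by
  refine ⟨Walk.cons hx ((walkUp w h s m).concat hy), ?_, ?_⟩
  · rw [Walk.isPath_def, Walk.support_cons, Walk.support_concat,
      walkUp_support]
    rw [List.nodup_cons, List.nodup_append']
    have hmem : ∀ x, x ∈ (List.range (m+1)).map (fun t => w (s + t)) ↔
        ∃ t, t ≤ m ∧ x = w (s + t) := by
      intro x
      simp only [List.mem_map, List.mem_range]
      constructor
      · rintro ⟨t, ht, rfl⟩; exact ⟨t, by omega, rfl⟩
      · rintro ⟨t, ht, rfl⟩; exact ⟨t, by omega, rfl⟩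
    refine ⟨?_, ?_, ?_, ?_⟩
    · -- w p not in rest
      rw [List.mem_append, hmem]
      rintro (⟨t, ht, hteq⟩ | hmem2)
      · have := hwinj p (s+t) (by omega) (by omega) hteq
        omega
      · simp only [List.mem_singleton] at hmem2
        have := hwinj p r (by omega) (by omega) hmem2
        omega
    · -- nodup of mapped range
      refine List.Nodup.map_on ?_ (List.nodup_range (n := _))
      intro x hx' y hy' hxy
      simp only [List.mem_range] at hx' hy'
      have := hwinj (s+x) (s+y) (by omega) (by omega) hxy
      omega
    · exact List.nodup_singleton _
    · -- disjoint
      intro x hx' hx''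
      simp only [List.mem_singleton] at hx''
      subst hx''
      rw [hmem] at hx'
      obtain ⟨t, ht, hteq⟩ := hx'
      have := hwinj r (s+t) (by omega) (by omega) hteq
      omega
  · simp [walkUp_length]


lemma degree_aux [Fintype V] [DecidableRel G.Adj] (n : ℕ)
    (w : ℕ → V) (hwinj : ∀ a b, a < n → b < n → w a = w b → a = b)
    (hsurj : ∀ y : V, ∃ i, i < n ∧ w i = y) (x : V) :
    G.degree x = ((Finset.range n).filter (fun i => G.Adj x (w i))).card := by
  classical
  rw [← card_neighborFinset_eq_degree]
  have himg : G.neighborFinset x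
      = ((Finset.range n).filter (fun i => G.Adj x (w i))).image w := by
    ext y
    simp only [mem_neighborFinset, Finset.mem_image, Finset.mem_filter, Finset.mem_range]
    constructor
    · intro hadj
      obtain ⟨i, hi, rfl⟩ := hsurj y
      exact ⟨i, ⟨hi, hadj⟩, rfl⟩
    · rintro ⟨i, ⟨hi, ha⟩, rfl⟩
      exact ha
  rw [himg, Finset.card_image_of_injOn]
  intro a ha b hb hab
  simp only [Finset.coe_filter, Finset.mem_range, Set.mem_setOf_eq] at ha hb
  exact hwinj a b ha.1 hb.1 hab

end aux

set_option maxHeartbeats 800000 in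
/-- Let `G` be a Hamiltonian graph of order `n ≥ 5` and let `(v₁, ..., vₙ, v₁)` be a
Hamiltonian cycle in `G` (given by a bijection `v : Fin n → V` with consecutive vertices
adjacent, cyclically). If `d(v₁) + d(vₙ) ≥ (4n − 1)/3` (stated multiplied out as
`3(d(v₁) + d(vₙ)) ≥ 4n − 1`), then `[2, ⌈n/2⌉ + 2] ⊆ R_G(v₁, vₙ)`. -/
theorem hamiltonian_path_orders {V : Type*} [Fintype V] (G : SimpleGraph V)
    [DecidableRel G.Adj] (n : ℕ) (hn : 5 ≤ n) (hcard : Fintype.card V = n)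
    (v : Fin n → V) (hbij : Function.Bijective v)
    (hcyc : ∀ i : Fin n, G.Adj (v i) (v ⟨((i : ℕ) + 1) % n, Nat.mod_lt _ (by omega)⟩))
    (hdeg : 4 * n - 1 ≤ 3 * (G.degree (v ⟨0, by omega⟩) + G.degree (v ⟨n - 1, by omega⟩))) :
    ∀ q : ℕ, 2 ≤ q → q ≤ (n + 1) / 2 + 2 →
      q ∈ pathOrders G (v ⟨0, by omega⟩) (v ⟨n - 1, by omega⟩) := by
  intro q hq2 hqu
  have hn0 : 0 < n := by omega
  obtain ⟨w, hwdef⟩ : ∃ w : ℕ → V, w = fun i => v ⟨i % n, Nat.mod_lt _ hn0⟩ := ⟨_, rfl⟩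
  have hwlt : ∀ i (hi : i < n), w i = v ⟨i, hi⟩ := by
    intro i hi
    rw [hwdef]
    exact congrArg v (Fin.ext (by simp [Nat.mod_eq_of_lt hi]))
  have hadj : ∀ i, G.Adj (w i) (w (i+1)) := by
    intro i
    have h := hcyc ⟨i % n, Nat.mod_lt _ hn0⟩
    have e1 : w i = v ⟨i % n, Nat.mod_lt _ hn0⟩ := by rw [hwdef]
    have e2 : w (i+1) = v ⟨(i % n + 1) % n, Nat.mod_lt _ hn0⟩ := by
      rw [hwdef]
      exact congrArg v (Fin.ext (by simp [Nat.mod_add_mod]))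
    rw [e1, e2]
    exact h
  have hwinj : ∀ a b, a < n → b < n → w a = w b → a = b := by
    intro a b ha hb hab
    rw [hwlt a ha, hwlt b hb] at hab
    have := hbij.injective hab
    simpa [Fin.ext_iff] using this
  have hsurj : ∀ y : V, ∃ i, i < n ∧ w i = y := by
    intro y
    obtain ⟨k, rfl⟩ := hbij.surjective y
    exact ⟨k.val, k.isLt, by rw [hwlt k.val k.isLt]⟩
  have hu0 : v ⟨0, by omega⟩ = w 0 := (hwlt 0 (by omega)).symm
  have hu1 : v ⟨n-1, by omega⟩ = w (n-1) := (hwlt (n-1) (by omega)).symm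
  have hwn : w n = w 0 := by
    rw [hwdef]
    exact congrArg v (Fin.ext (by simp [Nat.mod_self]))
  have h10 : G.Adj (w (n-1)) (w 0) := by
    have := hadj (n-1)
    rwa [show n - 1 + 1 = n by omega, hwn] at this
  rw [hu0, hu1]
  -- the case q = 2
  rcases eq_or_lt_of_le hq2 with hq2' | hq3
  · exact ⟨Walk.cons h10.symm Walk.nil, by
      rw [Walk.isPath_def]
      simp [h10.symm.ne], by
      rw [Walk.length_cons, Walk.length_nil]; omega⟩
  -- q ≥ 3
  set A := (Finset.Icc 1 (n-2)).filter (fun i => G.Adj (w 0) (w i)) with hA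
  set B := (Finset.Icc 1 (n-2)).filter (fun i => G.Adj (w (n-1)) (w i)) with hB
  have hdA : G.degree (w 0) = A.card + 1 := by
    rw [degree_aux n w hwinj hsurj]
    have : (Finset.range n).filter (fun i => G.Adj (w 0) (w i)) = insert (n-1) A := by
      ext i
      simp only [Finset.mem_filter, Finset.mem_range, Finset.mem_insert, hA, Finset.mem_Icc]
      constructor
      · rintro ⟨hi, hadji⟩
        rcases eq_or_ne i (n-1) with rfl | hne
        · exact Or.inl rfl
        · rcases Nat.eq_zero_or_pos i with rfl | hipos
          · exact absurd rfl hadji.ne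
          · exact Or.inr ⟨⟨by omega, by omega⟩, hadji⟩
      · rintro (rfl | ⟨⟨h1, h2⟩, hadji⟩)
        · exact ⟨by omega, h10.symm⟩
        · exact ⟨by omega, hadji⟩
    rw [this, Finset.card_insert_of_notMem]
    intro hmem
    rw [hA, Finset.mem_filter, Finset.mem_Icc] at hmem
    omega
  have hdB : G.degree (w (n-1)) = B.card + 1 := by
    rw [degree_aux n w hwinj hsurj]
    have : (Finset.range n).filter (fun i => G.Adj (w (n-1)) (w i)) = insert 0 B := by
      ext i
      simp only [Finset.mem_filter, Finset.mem_range, Finset.mem_insert, hB, Finset.mem_Icc]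
      constructor
      · rintro ⟨hi, hadji⟩
        rcases Nat.eq_zero_or_pos i with rfl | hipos
        · exact Or.inl rfl
        · rcases eq_or_ne i (n-1) with rfl | hne
          · exact absurd rfl hadji.ne
          · exact Or.inr ⟨⟨by omega, by omega⟩, hadji⟩
      · rintro (rfl | ⟨⟨h1, h2⟩, hadji⟩)
        · exact ⟨by omega, h10⟩
        · exact ⟨by omega, hadji⟩
    rw [this, Finset.card_insert_of_notMem]
    intro hmem
    rw [hB, Finset.mem_filter, Finset.mem_Icc] at hmem
    omega
  have h0' : G.degree (v ⟨0, by omega⟩) = A.card + 1 := by rw [hu0]; exact hdA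
  have h1' : G.degree (v ⟨n - 1, by omega⟩) = B.card + 1 := by rw [hu1]; exact hdB
  rw [h0', h1'] at hdeg
  set m := q - 3 with hm
  have hcomb := comb_aux (n-2) m (by omega) (by omega) A B
    (Finset.filter_subset _ _) (Finset.filter_subset _ _) (by omega)
  obtain ⟨i, hiA, j, hjB, hij⟩ := hcomb
  rw [hA, Finset.mem_filter, Finset.mem_Icc] at hiA
  rw [hB, Finset.mem_filter, Finset.mem_Icc] at hjB
  rcases hij with hij | hij
  · -- i = j + m : descending path, build from (n-1) side and reverse
    obtain ⟨P, hP, hlen⟩ := core_path n hn w hadj hwinj j m (n-1) 0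
      (by omega) (by omega) (Or.inr rfl) (Or.inl rfl) (by omega)
      hjB.2 (by rw [← hij]; exact hiA.2.symm)
    exact ⟨P.reverse, hP.reverse, by rw [Walk.length_reverse]; omega⟩
  · -- j = i + m : ascending path
    obtain ⟨P, hP, hlen⟩ := core_path n hn w hadj hwinj i m 0 (n-1)
      (by omega) (by omega) (Or.inl rfl) (Or.inr rfl) (by omega)
      hiA.2 (by rw [← hij]; exact hjB.2.symm)
    exact ⟨P, hP, by omega⟩
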